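/- Fix l ∈ {1,...,K} and define ℬ^l_π(i) = { S ⊆ 𝒦 \ {π(1),...,π(i)} : π(i+1) ∈ S and |S| = l }. Then the sets ℬ^l_π(0), ..., ℬ^l_π(|T|-1) are pairwise disjoint and their union equals { S ⊆ 𝒦 : S ∩ T ≠ ∅ and |S| = l }. -/

import Mathlib

theorem Bl_disjoint_union (K : ℕ) (hK : 0 < K) (l : ℕ) (hl1 : 1 ≤ l) (hlK : l ≤ K)
    (T : Finset (Fin K)) (hT : T.Nonempty)
    (π : Fin T.card → Fin K) (hinj : Function.Injective π)
    (himg : Finset.image π Finset.univ = T) :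
    (∀ i j : Fin T.card, i ≠ j →
      Disjoint
        ((Finset.univ : Finset (Fin K)).powerset.filter
          (fun S => (π i ∈ S ∧ ∀ m, m < i → π m ∉ S) ∧ S.card = l))
        ((Finset.univ : Finset (Fin K)).powerset.filter
          (fun S => (π j ∈ S ∧ ∀ m, m < j → π m ∉ S) ∧ S.card = l))) ∧
    (Finset.univ.biUnion (fun i : Fin T.card =>
        (Finset.univ : Finset (Fin K)).powerset.filter
          (fun S => (π i ∈ S ∧ ∀ m, m < i → π m ∉ S) ∧ S.card = l)))
      = (Finset.univ : Finset (Fin K)).powerset.filter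
          (fun S => (S ∩ T).Nonempty ∧ S.card = l) := by
  constructor
  · intro i j hij
    rw [Finset.disjoint_left]
    intro S hS hS'
    simp only [Finset.mem_filter] at hS hS'
    rcases lt_or_gt_of_ne hij with h | h
    · exact hS'.2.1.2 i h hS.2.1.1
    · exact hS.2.1.2 j h hS'.2.1.1
  · ext S
    simp only [Finset.mem_biUnion, Finset.powerset_univ, Finset.mem_filter,
      Finset.mem_univ, true_and]
    constructor
    · rintro ⟨i, ⟨hi, -⟩, hc⟩
      refine ⟨⟨π i, Finset.mem_inter.2 ⟨hi, ?_⟩⟩, hc⟩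
      rw [← himg]; exact Finset.mem_image_of_mem π (Finset.mem_univ i)
    · rintro ⟨⟨t, ht⟩, hc⟩
      rw [Finset.mem_inter, ← himg, Finset.mem_image] at ht
      obtain ⟨htS, i, _, hit⟩ := ht
      have hne : {i' : Fin T.card | π i' ∈ S}.Nonempty := ⟨i, by simpa [hit] using htS⟩
      classical
      obtain ⟨j, hj, hmin⟩ := Set.Finite.exists_minimalFor id _
        (Set.toFinite _) hne
      refine ⟨j, ⟨hj, ?_⟩, hc⟩
      intro m hm hmS
      have := hmin (j := m) hmS hm.le
      simp only [id] at this
      exact absurd hm (not_lt.mpr this)
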